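/- Let Y be noncentral chi-squared with k degrees of freedom and noncentrality η ≥ 0. Then for 0 ≤ c < 1: P(Y ≥ (1+c)k) ≤ exp(ηc/(4−2c) − c²k/8). -/

import Mathlib

open MeasureTheory ProbabilityTheory Real
open scoped ENNReal NNReal

lemma aux_fun_eq (m t : ℝ) (ht : t < 1/2) :
    (fun x => gaussianPDFReal m 1 x * rexp (t * x ^ 2))
      = fun x => ((Real.sqrt (2 * π))⁻¹ * rexp (t * m ^ 2 / (1 - 2 * t))) *
          rexp (-((1 - 2 * t) / 2) * (x - m / (1 - 2 * t)) ^ 2) := by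
  have h1 : (1 : ℝ) - 2 * t ≠ 0 := by linarith
  ext x
  have hexp : -(x - m) ^ 2 / 2 + t * x ^ 2
      = t * m ^ 2 / (1 - 2 * t) + -((1 - 2 * t) / 2) * (x - m / (1 - 2 * t)) ^ 2 := by
    field_simp
    ring
  rw [gaussianPDFReal]
  simp only [NNReal.coe_one, mul_one]
  rw [mul_assoc, ← Real.exp_add, mul_assoc, ← Real.exp_add, hexp]

lemma aux_integrable (m t : ℝ) (ht : t < 1/2) :
    Integrable (fun x => gaussianPDFReal m 1 x * rexp (t * x ^ 2)) := by
  rw [aux_fun_eq m t ht]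
  have ha : 0 < (1 - 2 * t) / 2 := by linarith
  exact ((integrable_exp_neg_mul_sq ha).comp_sub_right _).const_mul _

lemma aux_integral (m t : ℝ) (ht : t < 1/2) :
    ∫ x, gaussianPDFReal m 1 x * rexp (t * x ^ 2)
      = rexp (t * m ^ 2 / (1 - 2 * t)) / Real.sqrt (1 - 2 * t) := by
  have h1 : (0:ℝ) < 1 - 2 * t := by linarith
  rw [aux_fun_eq m t ht, integral_const_mul,
    integral_sub_right_eq_self (fun x => rexp (-((1 - 2 * t) / 2) * x ^ 2)) (m / (1 - 2*t)),
    integral_gaussian,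
    show π / ((1 - 2 * t) / 2) = 2 * π / (1 - 2 * t) by rw [div_div_eq_mul_div]; ring_nf,
    Real.sqrt_div (by positivity : (0:ℝ) ≤ 2 * π)]
  have h2 : Real.sqrt (2 * π) ≠ 0 := by positivity
  field_simp

lemma gaussianReal_one_eq (m : ℝ) :
    gaussianReal m 1 = volume.withDensity
      (fun x => ((gaussianPDFReal m 1 x).toNNReal : ℝ≥0∞)) := by
  rw [gaussianReal_of_var_ne_zero m one_ne_zero]
  rfl

lemma integral_exp_sq_gaussianReal (m t : ℝ) (ht : t < 1/2) :
    ∫ x, rexp (t * x ^ 2) ∂(gaussianReal m 1)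
      = rexp (t * m ^ 2 / (1 - 2 * t)) / Real.sqrt (1 - 2 * t) := by
  rw [gaussianReal_one_eq,
    integral_withDensity_eq_integral_smul ((measurable_gaussianPDFReal m 1).real_toNNReal)]
  rw [show (fun x => (gaussianPDFReal m 1 x).toNNReal • rexp (t * x ^ 2))
      = fun x => gaussianPDFReal m 1 x * rexp (t * x ^ 2) from funext fun x => by
    rw [NNReal.smul_def, Real.coe_toNNReal _ (gaussianPDFReal_nonneg m 1 x), smul_eq_mul]]
  exact aux_integral m t ht

lemma integrable_exp_sq_gaussianReal (m t : ℝ) (ht : t < 1/2) :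
    Integrable (fun x => rexp (t * x ^ 2)) (gaussianReal m 1) := by
  rw [gaussianReal_one_eq,
    integrable_withDensity_iff_integrable_smul ((measurable_gaussianPDFReal m 1).real_toNNReal)]
  rw [show (fun x => (gaussianPDFReal m 1 x).toNNReal • rexp (t * x ^ 2))
      = fun x => gaussianPDFReal m 1 x * rexp (t * x ^ 2) from funext fun x => by
    rw [NNReal.smul_def, Real.coe_toNNReal _ (gaussianPDFReal_nonneg m 1 x), smul_eq_mul]]
  exact aux_integrable m t ht

lemma key_ineq {x : ℝ} (h0 : 0 ≤ x) (h1 : x ≤ 1/2) : rexp (-(x + x ^ 2)) ≤ 1 - x := by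
  have hq := Real.quadratic_le_exp_of_nonneg (show 0 ≤ x + x ^ 2 by positivity)
  have hx1 : (0:ℝ) < 1 - x := by linarith
  rw [Real.exp_neg, inv_eq_one_div, div_le_iff₀ (Real.exp_pos _)]
  nlinarith [mul_le_mul_of_nonneg_left hq hx1.le]

lemma sqrt_inv_le {c : ℝ} (hc0 : 0 ≤ c) (hc1 : c < 1) :
    (Real.sqrt (1 - 2 * (c / 4)))⁻¹ ≤ rexp (c / 4 + c ^ 2 / 8) := by
  have h12 : (0:ℝ) < 1 - 2 * (c / 4) := by linarith
  have hkey : rexp (-(c / 4 + c ^ 2 / 8)) ≤ Real.sqrt (1 - 2 * (c / 4)) := by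
    rw [show Real.sqrt (1 - 2 * (c / 4)) = Real.sqrt (1 - c / 2) by congr 1; ring]
    rw [Real.le_sqrt (Real.exp_pos _).le (by linarith)]
    have h2 : rexp (-(c / 4 + c ^ 2 / 8)) ^ 2 = rexp (-(c / 2 + (c / 2) ^ 2)) := by
      rw [pow_two, ← Real.exp_add]
      ring_nf
    rw [h2]
    have := key_ineq (x := c / 2) (by linarith) (by linarith)
    linarith [this]
  calc (Real.sqrt (1 - 2 * (c / 4)))⁻¹ ≤ (rexp (-(c / 4 + c ^ 2 / 8)))⁻¹ := by
        exact inv_anti₀ (Real.exp_pos _) hkey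
    _ = rexp (c / 4 + c ^ 2 / 8) := by rw [Real.exp_neg, inv_inv]

/-- upper tail of a noncentral chi-squared variable:
P(Y ≥ (1+c)k) ≤ exp(ηc/(4−2c) − c²k/8) for 0 ≤ c < 1. -/
theorem stmt_11 {Ω : Type*} [MeasurableSpace Ω] (μ : Measure Ω) [IsProbabilityMeasure μ]
    (k : ℕ) (G : Fin k → Ω → ℝ) (means : Fin k → ℝ) (η : ℝ)
    (hmeas : ∀ i, Measurable (G i))
    (hindep : iIndepFun G μ)
    (hlaw : ∀ i, Measure.map (G i) μ = gaussianReal (means i) 1)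
    (hη : η = ∑ i, (means i) ^ 2)
    (c : ℝ) (hc0 : 0 ≤ c) (hc1 : c < 1) :
    (μ {ω | (1 + c) * k ≤ ∑ i, (G i ω) ^ 2}).toReal
      ≤ Real.exp (η * c / (4 - 2 * c) - c ^ 2 * k / 8) := by
  classical
  set t : ℝ := c / 4 with htdef
  have ht0 : (0:ℝ) ≤ t := by positivity
  have ht2 : t < 1 / 2 := by rw [htdef]; linarith
  have h12 : (0:ℝ) < 1 - 2 * t := by linarith
  set X : Fin k → Ω → ℝ := fun i ω => G i ω ^ 2 with hXdef
  have hXmeas : ∀ i, Measurable (X i) := fun i => (hmeas i).pow_const 2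
  have hXindep : iIndepFun X μ :=
    hindep.comp (fun _ (x : ℝ) => x ^ 2) fun _ => measurable_id.pow_const 2
  have hint : ∀ i, Integrable (fun ω => rexp (t * X i ω)) μ := by
    intro i
    have h := integrable_exp_sq_gaussianReal (means i) t ht2
    rw [← hlaw i] at h
    exact (integrable_map_measure h.1 (hmeas i).aemeasurable).mp h
  have hmgf : ∀ i, mgf (X i) μ t
      = rexp (t * means i ^ 2 / (1 - 2 * t)) / Real.sqrt (1 - 2 * t) := by
    intro i
    have hmap : ∫ x, rexp (t * x ^ 2) ∂(Measure.map (G i) μ)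
        = ∫ ω, rexp (t * (G i ω) ^ 2) ∂μ :=
      integral_map (hmeas i).aemeasurable
        ((measurable_id.pow_const 2).const_mul t).exp.aestronglyMeasurable
    rw [mgf, show (fun ω => rexp (t * X i ω)) = fun ω => rexp (t * (G i ω) ^ 2) from rfl,
      ← hmap, hlaw i]
    exact integral_exp_sq_gaussianReal (means i) t ht2
  have hintsum : Integrable (fun ω => rexp (t * (∑ i, X i) ω)) μ :=
    hXindep.integrable_exp_mul_sum hXmeas fun i _ => hint i
  have hch := measure_ge_le_exp_mul_mgf (μ := μ) (X := ∑ i, X i) ((1 + c) * k) ht0 hintsum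
  have hset : {ω | (1 + c) * (k:ℝ) ≤ (∑ i, X i) ω}
      = {ω | (1 + c) * (k:ℝ) ≤ ∑ i, (G i ω) ^ 2} := by
    ext ω
    simp [hXdef, Finset.sum_apply]
  rw [hset] at hch
  refine hch.trans ?_
  rw [hXindep.mgf_sum hXmeas Finset.univ]
  have hprod : ∏ i, mgf (X i) μ t
      ≤ ∏ i : Fin k, rexp (t * means i ^ 2 / (1 - 2 * t) + (c / 4 + c ^ 2 / 8)) := by
    refine Finset.prod_le_prod (fun i _ => ?_) (fun i _ => ?_)
    · rw [hmgf i]; positivity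
    · rw [hmgf i, Real.exp_add, div_eq_mul_inv]
      exact mul_le_mul_of_nonneg_left (sqrt_inv_le hc0 hc1) (Real.exp_pos _).le
  calc rexp (-t * ((1 + c) * k)) * ∏ i, mgf (X i) μ t
      ≤ rexp (-t * ((1 + c) * k))
        * ∏ i : Fin k, rexp (t * means i ^ 2 / (1 - 2 * t) + (c / 4 + c ^ 2 / 8)) :=
        mul_le_mul_of_nonneg_left hprod (Real.exp_pos _).le
    _ = rexp (-t * ((1 + c) * k)
        + ∑ i : Fin k, (t * means i ^ 2 / (1 - 2 * t) + (c / 4 + c ^ 2 / 8))) := by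
        rw [← Real.exp_sum, ← Real.exp_add]
    _ = rexp (η * c / (4 - 2 * c) - c ^ 2 * k / 8) := by
        congr 1
        rw [Finset.sum_add_distrib, Finset.sum_const, Finset.card_univ, Fintype.card_fin,
          nsmul_eq_mul,
          show ∑ i : Fin k, t * means i ^ 2 / (1 - 2 * t) = t * η / (1 - 2 * t) by
            rw [hη, Finset.mul_sum, Finset.sum_div]]
        have h4 : (4:ℝ) - 2 * c ≠ 0 := by linarith
        rw [htdef]
        field_simp
        ring
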